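/- arXiv:quant-ph/0512258 — 2 statements merged into one kernel-verified Lean document; each statement's English description precedes it below -/
import Mathlib

section
/- Let X, B, C be nonempty finite types, let (ρ^x)_{x∈X} be a family of PSD matrices indexed by B × C, let σ be a PSD matrix indexed by C, and let λ ≥ 0. If λ·(id_B ⊗ σ) − ∑_{x∈X} ρ^x is PSD, then λ·(id_X ⊗ id_B ⊗ σ) − ∑_{x∈X} E_{xx} ⊗ ρ^x is PSD. (Classical subsystems have nonnegative min-entropy: for a state ρ_{XBC} classical on X, H_min(ρ_{XBC}|σ) ≥ H_min(ρ_{BC}|σ).) -/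
open Matrix Kronecker
open scoped ComplexOrder

private lemma psd_add {D : Type*} [Fintype D] {A B : Matrix D D ℂ}
    (hA : A.PosSemidef) (hB : B.PosSemidef) : (A + B).PosSemidef := by
  refine Matrix.PosSemidef.of_dotProduct_mulVec_nonneg (hA.1.add hB.1) fun v => ?_
  rw [add_mulVec, dotProduct_add]
  exact add_nonneg (hA.dotProduct_mulVec_nonneg v) (hB.dotProduct_mulVec_nonneg v)

private lemma psd_sum {X D : Type*} [Fintype D] {s : Finset X}
    {f : X → Matrix D D ℂ} (hf : ∀ x ∈ s, (f x).PosSemidef) :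
    (∑ x ∈ s, f x).PosSemidef := by
  classical
  induction s using Finset.induction_on with
  | empty => simpa using Matrix.PosSemidef.zero
  | insert _ _ hx ih =>
    rw [Finset.sum_insert hx]
    exact psd_add (hf _ (Finset.mem_insert_self _ _))
      (ih fun x hxs => hf x (Finset.mem_insert_of_mem hxs))

private lemma stdBasis_kron_psd {X D : Type*} [Fintype X] [Fintype D]
    [DecidableEq X] (x : X) {A : Matrix D D ℂ} (hA : A.PosSemidef) :
    (Matrix.single x x (1 : ℂ) ⊗ₖ A).PosSemidef := by
  refine Matrix.PosSemidef.of_dotProduct_mulVec_nonneg ?_ ?_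
  · ext ⟨p, i⟩ ⟨q, j⟩
    simp only [conjTranspose_apply, kroneckerMap_apply, star_mul']
    by_cases hp : p = x <;> by_cases hq : q = x
    · subst hp; subst hq
      simp only [Matrix.single_apply_same, star_one, one_mul, mul_one]
      exact congrFun (congrFun hA.1 i) j
    · rw [Matrix.single_apply_of_ne _ _ _ _ _ (by tauto),
        Matrix.single_apply_of_ne _ _ _ _ _ (by tauto)]
      simp
    · rw [Matrix.single_apply_of_ne _ _ _ _ _ (by tauto),
        Matrix.single_apply_of_ne _ _ _ _ _ (by tauto)]
      simp
    · rw [Matrix.single_apply_of_ne _ _ _ _ _ (by tauto),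
        Matrix.single_apply_of_ne _ _ _ _ _ (by tauto)]
      simp
  · intro v
    have key : dotProduct (star v) ((Matrix.single x x (1 : ℂ) ⊗ₖ A) *ᵥ v)
        = dotProduct (star fun j => v (x, j)) (A *ᵥ fun j => v (x, j)) := by
      rw [dotProduct, Fintype.sum_prod_type]
      rw [Finset.sum_eq_single x]
      · simp only [dotProduct, mulVec, Pi.star_apply]
        congr 1; ext i; congr 1
        simp only [dotProduct, Fintype.sum_prod_type]
        rw [Finset.sum_eq_single x]
        · simp [kroneckerMap_apply, Matrix.single_apply_same]
        · intro q _ hq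
          simp [kroneckerMap_apply, Matrix.single, hq, Ne.symm hq]
        · simp
      · intro p _ hp
        simp [mulVec, dotProduct, Fintype.sum_prod_type, kroneckerMap_apply,
          Matrix.single, hp, Ne.symm hp]
      · simp
    rw [key]
    exact hA.dotProduct_mulVec_nonneg _

/-- Classical subsystems have nonnegative min-entropy: if `λ·(id_B ⊗ σ) − ∑ₓ ρ^x`
is PSD, then `λ·(id_X ⊗ id_B ⊗ σ) − ∑ₓ E_xx ⊗ ρ^x` is PSD. -/
theorem classical_subsystem_min_entropy_nonneg
    {X B C : Type*} [Fintype X] [Fintype B] [Fintype C]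
    [DecidableEq X] [DecidableEq B] [DecidableEq C]
    [Nonempty X] [Nonempty B] [Nonempty C]
    (ρ : X → Matrix (B × C) (B × C) ℂ) (hρ : ∀ x, (ρ x).PosSemidef)
    (σ : Matrix C C ℂ) (hσ : σ.PosSemidef)
    (l : ℝ) (hl : 0 ≤ l)
    (h : (l • ((1 : Matrix B B ℂ) ⊗ₖ σ) - ∑ x : X, ρ x).PosSemidef) :
    (l • ((1 : Matrix X X ℂ) ⊗ₖ ((1 : Matrix B B ℂ) ⊗ₖ σ))
      - ∑ x : X, Matrix.single x x (1 : ℂ) ⊗ₖ ρ x).PosSemidef := by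
  have hterm : ∀ x : X, (l • ((1 : Matrix B B ℂ) ⊗ₖ σ) - ρ x).PosSemidef := by
    intro x
    have hsplit : (∑ y : X, ρ y) = ρ x + ∑ y ∈ Finset.univ.erase x, ρ y :=
      (Finset.add_sum_erase _ ρ (Finset.mem_univ x)).symm
    have heq : l • ((1 : Matrix B B ℂ) ⊗ₖ σ) - ρ x
        = (l • ((1 : Matrix B B ℂ) ⊗ₖ σ) - ∑ y : X, ρ y)
          + ∑ y ∈ Finset.univ.erase x, ρ y := by
      rw [hsplit]; abel
    rw [heq]
    exact psd_add h (psd_sum fun y _ => hρ y)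
  have key : l • ((1 : Matrix X X ℂ) ⊗ₖ ((1 : Matrix B B ℂ) ⊗ₖ σ))
      - ∑ x : X, Matrix.single x x (1 : ℂ) ⊗ₖ ρ x
      = ∑ x : X, Matrix.single x x (1 : ℂ) ⊗ₖ (l • ((1 : Matrix B B ℂ) ⊗ₖ σ) - ρ x) := by
    ext ⟨p, i⟩ ⟨q, j⟩
    simp only [Matrix.sub_apply, Matrix.smul_apply, kroneckerMap_apply,
      Matrix.sum_apply, Matrix.one_apply, mul_sub, Finset.sum_sub_distrib]
    congr 1
    by_cases hpq : p = q
    · subst hpq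
      rw [Finset.sum_eq_single p]
      · simp [Matrix.single_apply_same, smul_eq_mul]
      · intro b _ hb
        rw [Matrix.single_apply_of_ne _ _ _ _ _ (by tauto), zero_mul]
      · simp
    · rw [Finset.sum_eq_zero, if_neg hpq]
      · simp
      · intro b _
        rw [Matrix.single_apply_of_ne, zero_mul]
        rcases eq_or_ne p b with rfl | hpb
        · tauto
        · tauto
  rw [key]
  exact psd_sum fun x _ => stdBasis_kron_psd x (hterm x)
end

section
/- Let ρ be a PSD complex matrix and P a complex matrix with Pᴴ = P and P·P = P (an orthogonal projector), both indexed by the same nonempty finite type. Then ‖ρ − P·ρ·P‖₁ ≤ 2·√( tr(ρ) · (tr(ρ) − tr(P·ρ·P)) ), where ‖M‖₁ denotes the trace norm of the Hermitian matrix M (the sum of the absolute values of its eigenvalues) and tr(ρ), tr(PρP) are real with tr(PρP) ≤ tr(ρ). (Gentle-measurement bound: projecting a state changes it little in trace norm if the projection succeeds with high probability.) -/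
open Matrix
open scoped Classical ComplexOrder

/-- Trace norm of a Hermitian complex matrix: the sum of the absolute values of
its eigenvalues. -/
noncomputable def traceNorm {n : Type*} [Fintype n] [DecidableEq n] (M : Matrix n n ℂ) : ℝ :=
  if h : M.IsHermitian then ∑ i, |h.eigenvalues i| else 0

lemma star_mul_self_re (z : ℂ) : (star z * z).re = ‖z‖ ^ 2 := by
  rw [Complex.sq_norm, Complex.normSq_apply]
  simp [Complex.mul_re]

/-- Cauchy-Schwarz for the Frobenius inner product. -/
lemma traceCS {n : Type*} [Fintype n] (A B : Matrix n n ℂ) :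
    ‖(Aᴴ * B).trace‖
      ≤ Real.sqrt ((Aᴴ * A).trace.re) * Real.sqrt ((Bᴴ * B).trace.re) := by
  classical
  set v : EuclideanSpace ℂ (n × n) := WithLp.toLp 2 (fun p : n × n => A p.1 p.2) with hvdef
  set w : EuclideanSpace ℂ (n × n) := WithLp.toLp 2 (fun p : n × n => B p.1 p.2) with hwdef
  have hvw : (Aᴴ * B).trace = (inner ℂ v w : ℂ) := by
    simp only [PiLp.inner_apply, RCLike.inner_apply, hvdef, hwdef, PiLp.toLp_apply]
    simp only [Matrix.trace, Matrix.diag, Matrix.mul_apply, Matrix.conjTranspose_apply,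
      starRingEnd_apply]
    rw [Fintype.sum_prod_type]
    rw [Finset.sum_comm]
    exact Finset.sum_congr rfl fun i _ => Finset.sum_congr rfl fun j _ => mul_comm _ _
  have htrA : (Aᴴ * A).trace.re = ∑ p : n × n, ‖v p‖ ^ 2 := by
    simp only [Matrix.trace, Matrix.diag, Matrix.mul_apply, Matrix.conjTranspose_apply]
    rw [Complex.re_sum, Fintype.sum_prod_type, Finset.sum_comm]
    refine Finset.sum_congr rfl fun i _ => ?_
    rw [Complex.re_sum]
    refine Finset.sum_congr rfl fun j _ => ?_
    simp only [hvdef, PiLp.toLp_apply]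
    exact star_mul_self_re _
  have htrB : (Bᴴ * B).trace.re = ∑ p : n × n, ‖w p‖ ^ 2 := by
    simp only [Matrix.trace, Matrix.diag, Matrix.mul_apply, Matrix.conjTranspose_apply]
    rw [Complex.re_sum, Fintype.sum_prod_type, Finset.sum_comm]
    refine Finset.sum_congr rfl fun i _ => ?_
    rw [Complex.re_sum]
    refine Finset.sum_congr rfl fun j _ => ?_
    simp only [hwdef, PiLp.toLp_apply]
    exact star_mul_self_re _
  have hnv : ‖v‖ = Real.sqrt ((Aᴴ * A).trace.re) := by
    rw [EuclideanSpace.norm_eq, htrA]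
  have hnw : ‖w‖ = Real.sqrt ((Bᴴ * B).trace.re) := by
    rw [EuclideanSpace.norm_eq, htrB]
  have key := norm_inner_le_norm (𝕜 := ℂ) v w
  rw [hnv, hnw] at key
  rw [hvw]
  exact key

lemma trace_re_nonneg' {n : Type*} [Fintype n] [DecidableEq n] {M : Matrix n n ℂ}
    (hM : M.PosSemidef) : 0 ≤ M.trace.re := by
  rw [Matrix.trace, Complex.re_sum]
  apply Finset.sum_nonneg
  intro i _
  have h := hM.re_dotProduct_nonneg (Pi.single i 1)
  simpa [dotProduct, Matrix.mulVec, Pi.single_apply] using h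

lemma sandwich_mul {n : Type*} [Fintype n] [DecidableEq n] (U A B : Matrix n n ℂ)
    (h : star U * U = 1) :
    (U * A * star U) * (U * B * star U) = U * (A * B) * star U := by
  have h1 : (U * A * star U) * (U * B * star U)
      = U * A * ((star U * U) * (B * star U)) := by
    simp only [Matrix.mul_assoc]
  rw [h1, h, Matrix.one_mul]
  simp only [Matrix.mul_assoc]

lemma trace_sandwich {n : Type*} [Fintype n] [DecidableEq n] (U M : Matrix n n ℂ)
    (h : star U * U = 1) : (U * M * star U).trace = M.trace := by
  rw [Matrix.trace_mul_cycle, h, Matrix.one_mul]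

/-- Gentle-measurement bound: for a PSD matrix `ρ` and an orthogonal projector `P`,
`‖ρ − PρP‖₁ ≤ 2·√(tr(ρ)·(tr(ρ) − tr(PρP)))`. -/
theorem gentle_measurement
    {n : Type*} [Fintype n] [DecidableEq n] [Nonempty n]
    (ρ P : Matrix n n ℂ) (hρ : ρ.PosSemidef)
    (hP : Pᴴ = P) (hProj : P * P = P) :
    traceNorm (ρ - P * ρ * P)
      ≤ 2 * Real.sqrt (ρ.trace.re * (ρ.trace.re - ((P * ρ * P).trace).re)) := by
  set Q : Matrix n n ℂ := 1 - P with hQdef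
  have hQH : Qᴴ = Q := by
    simp [hQdef, conjTranspose_sub, hP]
  have hQQ : Q * Q = Q := by
    simp only [hQdef, sub_mul, mul_sub, one_mul, mul_one, hProj]
    abel
  have hPρP : (P * ρ * P).PosSemidef := by
    have h := hρ.conjTranspose_mul_mul_same P
    rwa [hP] at h
  have hQρQ : (Q * ρ * Q).PosSemidef := by
    have h := hρ.conjTranspose_mul_mul_same Q
    rwa [hQH] at h
  have hΔH : (ρ - P * ρ * P).IsHermitian := hρ.1.sub hPρP.1
  set μ : n → ℝ := hΔH.eigenvalues with hμdef
  set U : Matrix n n ℂ := (hΔH.eigenvectorUnitary : Matrix n n ℂ) with hUdef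
  have hUU : U * star U = 1 := Matrix.mem_unitaryGroup_iff.mp (hΔH.eigenvectorUnitary).2
  have hUU' : star U * U = 1 := Matrix.mem_unitaryGroup_iff'.mp (hΔH.eigenvectorUnitary).2
  set s : n → ℂ := fun i => if 0 ≤ μ i then 1 else -1 with hsdef
  set S : Matrix n n ℂ := U * diagonal s * star U with hSdef
  have hstars : star s = s := by
    funext i
    simp only [Pi.star_apply, hsdef]
    split <;> simp
  have hSH : Sᴴ = S := by
    rw [hSdef, ← star_eq_conjTranspose, Matrix.star_mul, Matrix.star_mul, star_star,
      star_eq_conjTranspose (diagonal s), diagonal_conjTranspose, hstars,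
      ← Matrix.mul_assoc]
  have hss : (fun i => s i * s i) = (1 : n → ℂ) := by
    funext i
    simp only [hsdef, Pi.one_apply]
    split <;> ring
  have hSS : S * S = 1 := by
    have hd1 : diagonal (1 : n → ℂ) = 1 := Matrix.diagonal_one
    rw [hSdef, sandwich_mul _ _ _ hUU', diagonal_mul_diagonal, hss, hd1,
      Matrix.mul_one, hUU]
  have hspec := hΔH.spectral_theorem
  rw [Unitary.conjStarAlgAut_apply, ← hUdef, ← hμdef] at hspec
  have hTr : (S * (ρ - P * ρ * P)).trace = ((∑ i, |μ i| : ℝ) : ℂ) := by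
    rw [hspec, hSdef, sandwich_mul _ _ _ hUU', diagonal_mul_diagonal,
      trace_sandwich _ _ hUU', trace_diagonal]
    push_cast
    refine Finset.sum_congr rfl fun i _ => ?_
    simp only [hsdef, Function.comp_apply]
    by_cases h : 0 ≤ μ i
    · rw [if_pos h, one_mul, abs_of_nonneg h]
      simp
    · rw [if_neg h, abs_of_neg (lt_of_not_ge h)]
      push_cast
      simp
  have hTN : traceNorm (ρ - P * ρ * P) = ‖(S * (ρ - P * ρ * P)).trace‖ := by
    rw [hTr, Complex.norm_real, Real.norm_eq_abs,
      abs_of_nonneg (Finset.sum_nonneg fun i _ => abs_nonneg _)]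
    simp only [traceNorm, dif_pos hΔH]
    rfl
  have hdec : S * (ρ - P * ρ * P) = S * (Q * ρ) + S * (P * ρ * Q) := by
    rw [hQdef]
    noncomm_ring
  obtain ⟨R, hRH, hRR⟩ : ∃ R : Matrix n n ℂ, Rᴴ = R ∧ R * R = ρ := by
    open scoped MatrixOrder in
    exact ⟨CFC.sqrt ρ, (CFC.sqrt_nonneg ρ).posSemidef.1, CFC.sqrt_mul_sqrt_self ρ hρ.nonneg⟩
  have cs1 : ‖(S * (Q * ρ)).trace‖
      ≤ Real.sqrt ((Q * ρ * Q).trace.re) * Real.sqrt (ρ.trace.re) := by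
    have e1 : (R * Q * S)ᴴ * R = S * (Q * ρ) := by
      simp only [conjTranspose_mul, hSH, hQH, hRH, ← hRR]
      noncomm_ring
    have e2 : (R * Q * S)ᴴ * (R * Q * S) = S * (Q * ρ * Q) * S := by
      simp only [conjTranspose_mul, hSH, hQH, hRH, ← hRR]
      noncomm_ring
    have e3 : (S * (Q * ρ * Q) * S).trace = (Q * ρ * Q).trace := by
      rw [Matrix.trace_mul_cycle, hSS, Matrix.one_mul]
    have key := traceCS (R * Q * S) R
    rw [e1, e2, e3, hRH, hRR] at key
    exact key
  have cs2 : ‖(S * (P * ρ * Q)).trace‖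
      ≤ Real.sqrt ((P * ρ * P).trace.re) * Real.sqrt ((Q * ρ * Q).trace.re) := by
    have e1 : (R * P * S)ᴴ * (R * Q) = S * (P * ρ * Q) := by
      simp only [conjTranspose_mul, hSH, hP, hRH, hQH, ← hRR]
      noncomm_ring
    have e2 : (R * P * S)ᴴ * (R * P * S) = S * (P * ρ * P) * S := by
      simp only [conjTranspose_mul, hSH, hP, hRH, ← hRR]
      noncomm_ring
    have e3 : (S * (P * ρ * P) * S).trace = (P * ρ * P).trace := by
      rw [Matrix.trace_mul_cycle, hSS, Matrix.one_mul]
    have e4 : (R * Q)ᴴ * (R * Q) = Q * ρ * Q := by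
      simp only [conjTranspose_mul, hQH, hRH, ← hRR]
      noncomm_ring
    have key := traceCS (R * P * S) (R * Q)
    rw [e1, e2, e3, e4] at key
    exact key
  have htrP : (P * ρ * P).trace = (P * ρ).trace := by
    rw [Matrix.trace_mul_comm (P * ρ) P, ← Matrix.mul_assoc, hProj]
  have htrQ : (Q * ρ * Q).trace = (Q * ρ).trace := by
    rw [Matrix.trace_mul_comm (Q * ρ) Q, ← Matrix.mul_assoc, hQQ]
  have htr : (Q * ρ * Q).trace = ρ.trace - (P * ρ * P).trace := by
    rw [htrQ, htrP, hQdef, Matrix.sub_mul, Matrix.one_mul, Matrix.trace_sub]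
  have htrre : (Q * ρ * Q).trace.re = ρ.trace.re - (P * ρ * P).trace.re := by
    rw [htr, Complex.sub_re]
  have ha : 0 ≤ ρ.trace.re := trace_re_nonneg' hρ
  have hb : 0 ≤ (P * ρ * P).trace.re := trace_re_nonneg' hPρP
  have hc : 0 ≤ (Q * ρ * Q).trace.re := trace_re_nonneg' hQρQ
  have hba : (P * ρ * P).trace.re ≤ ρ.trace.re := by
    have h := hc; rw [htrre] at h; linarith
  rw [hTN, hdec, Matrix.trace_add]
  calc ‖(S * (Q * ρ)).trace + (S * (P * ρ * Q)).trace‖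
      ≤ ‖(S * (Q * ρ)).trace‖ + ‖(S * (P * ρ * Q)).trace‖ :=
        norm_add_le _ _
    _ ≤ Real.sqrt ((Q * ρ * Q).trace.re) * Real.sqrt (ρ.trace.re)
        + Real.sqrt ((P * ρ * P).trace.re) * Real.sqrt ((Q * ρ * Q).trace.re) :=
        add_le_add cs1 cs2
    _ ≤ Real.sqrt (ρ.trace.re) * Real.sqrt ((Q * ρ * Q).trace.re)
        + Real.sqrt (ρ.trace.re) * Real.sqrt ((Q * ρ * Q).trace.re) := by
        rw [mul_comm (Real.sqrt ((Q * ρ * Q).trace.re))]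
        gcongr
    _ = 2 * (Real.sqrt (ρ.trace.re) * Real.sqrt ((Q * ρ * Q).trace.re)) := by ring
    _ = 2 * Real.sqrt (ρ.trace.re * (ρ.trace.re - (P * ρ * P).trace.re)) := by
        rw [← Real.sqrt_mul ha, htrre]
end
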